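/- With u₁(k) = ⌊a_k / √(2 - a_{k-1})⌋ and φ_k = 2^(k-1)·arctan(2·u₁(k)/(u₁(k)² - 1)), the sequence k ↦ (1 - sin(φ_k))/cos(φ_k) (for k ≥ 2) converges to 0 as k → ∞. -/

import Mathlib

open Filter Real

noncomputable def a : ℕ → ℝ
  | 0 => 0
  | k + 1 => Real.sqrt (2 + a k)

lemma a_eq_series (k : ℕ) : a k = Real.sqrtTwoAddSeries 0 k := by
  induction k with
  | zero => rfl
  | succ n ih => rw [a, ih]; rfl

lemma a_eq_cos (k : ℕ) : a k = 2 * Real.cos (π / 2 ^ (k + 1)) := by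
  rw [a_eq_series, Real.cos_pi_over_two_pow]; ring

lemma sqrt_two_sub_a (m : ℕ) : Real.sqrt (2 - a m) = 2 * Real.sin (π / 2 ^ (m + 2)) := by
  rw [a_eq_series, Real.sin_pi_over_two_pow_succ]; ring

-- tan difference bound
lemma tan_sub_ge {A B : ℝ} (hA : 0 ≤ A) (hAB : A ≤ B) (hB : B < π / 2) :
    B - A ≤ Real.tan B - Real.tan A := by
  have hcA : 0 < Real.cos A := Real.cos_pos_of_mem_Ioo ⟨by nlinarith [Real.pi_pos], by linarith⟩
  have hcB : 0 < Real.cos B := Real.cos_pos_of_mem_Ioo ⟨by nlinarith [Real.pi_pos], hB⟩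
  have hsA : 0 ≤ Real.sin A := Real.sin_nonneg_of_nonneg_of_le_pi hA (by nlinarith [Real.pi_pos])
  have hsB : 0 ≤ Real.sin B := Real.sin_nonneg_of_nonneg_of_le_pi (hA.trans hAB)
    (by nlinarith [Real.pi_pos])
  have hdiff : Real.tan B - Real.tan A = Real.sin (B - A) / (Real.cos A * Real.cos B) := by
    rw [Real.tan_eq_sin_div_cos, Real.tan_eq_sin_div_cos, Real.sin_sub]
    field_simp
  have hsge : (B - A) * Real.cos (B - A) ≤ Real.sin (B - A) := by
    rcases eq_or_lt_of_le hAB with h | h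
    · simp [← h]
    · have h1 : 0 < B - A := by linarith
      have h2 : B - A < π / 2 := by linarith
      have h3 : 0 < Real.cos (B - A) := Real.cos_pos_of_mem_Ioo ⟨by linarith, h2⟩
      have := Real.lt_tan h1 h2
      rw [Real.tan_eq_sin_div_cos, lt_div_iff₀ h3] at this
      linarith
  have hcos : Real.cos A * Real.cos B ≤ Real.cos (B - A) := by
    rw [Real.cos_sub]; nlinarith
  rw [hdiff, le_div_iff₀ (by positivity)]
  nlinarith [sub_nonneg.mpr hAB]

lemma key_id {x : ℝ} (h0 : 0 < x) (hπ : x < π) :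
    (1 - Real.sin x) / Real.cos x = Real.tan (π / 4 - x / 2) := by
  have hc : 0 < Real.cos (x / 2) :=
    Real.cos_pos_of_mem_Ioo ⟨by nlinarith [Real.pi_pos], by linarith⟩
  have hs : 0 < Real.sin (x / 2) := Real.sin_pos_of_pos_of_lt_pi (by linarith) (by linarith)
  set c := Real.cos (x / 2) with hcdef
  set s := Real.sin (x / 2) with hsdef
  have hsin : Real.sin x = 2 * s * c := by
    rw [hsdef, hcdef, ← Real.sin_two_mul]; ring_nf
  have hcos : Real.cos x = c ^ 2 - s ^ 2 := by
    rw [hsdef, hcdef, ← Real.cos_two_mul']; ring_nf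
  have hpyth : s ^ 2 + c ^ 2 = 1 := Real.sin_sq_add_cos_sq _
  have htan : Real.tan (π / 4 - x / 2) = (c - s) / (c + s) := by
    rw [Real.tan_eq_sin_div_cos, Real.sin_sub, Real.cos_sub, Real.sin_pi_div_four,
      Real.cos_pi_div_four, ← hcdef, ← hsdef]
    have h2 : Real.sqrt 2 / 2 ≠ 0 := by positivity
    rw [show √2 / 2 * c - √2 / 2 * s = √2 / 2 * (c - s) by ring,
      show √2 / 2 * c + √2 / 2 * s = √2 / 2 * (c + s) by ring,
      mul_div_mul_left _ _ h2]
  rw [htan, hsin, hcos]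
  rcases eq_or_ne (c - s) 0 with h | h
  · have h1 : c = s := by linarith
    rw [show c ^ 2 - s ^ 2 = 0 by rw [h1]; ring, div_zero, h, zero_div]
  · have h2 : c + s ≠ 0 := by positivity
    rw [show (1 : ℝ) - 2 * s * c = (c - s) ^ 2 by nlinarith,
      show c ^ 2 - s ^ 2 = (c - s) * (c + s) by ring]
    field_simp

noncomputable def u₁ (k : ℕ) : ℤ := ⌊a k / Real.sqrt (2 - a (k - 1))⌋

noncomputable def φ (k : ℕ) : ℝ :=
  (2 : ℝ) ^ (k - 1) * Real.arctan (2 * (u₁ k : ℝ) / ((u₁ k : ℝ) ^ 2 - 1))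

set_option maxHeartbeats 1000000 in
lemma phi_bounds (k : ℕ) :
    π / 2 ≤ φ (k + 2) ∧ φ (k + 2) ≤ π / 2 + 5 * π ^ 2 / 2 ^ (k + 2) := by
  have hπ := Real.pi_pos
  have hπlt : π < 3.15 := Real.pi_lt_d2
  set θ : ℝ := π / 2 ^ (k + 3) with hθdef
  have h8 : (8 : ℝ) ≤ 2 ^ (k + 3) := by
    calc (8 : ℝ) = 2 ^ 3 := by norm_num
    _ ≤ 2 ^ (k + 3) := by
      apply pow_le_pow_right₀ one_le_two
      omega
  have hθpos : 0 < θ := by positivity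
  have hθ8 : θ ≤ π / 8 := by
    rw [hθdef]
    exact div_le_div_of_nonneg_left hπ.le (by norm_num) h8
  have hθhalf : θ < π / 2 := by nlinarith
  have hsθ : 0 < Real.sin θ := Real.sin_pos_of_pos_of_lt_pi hθpos (by nlinarith)
  have hcθ : 0 < Real.cos θ := Real.cos_pos_of_mem_Ioo ⟨by nlinarith, hθhalf⟩
  have hsinlt : Real.sin θ < θ := Real.sin_lt hθpos
  have hcosgt : 1 - θ ^ 2 / 2 < Real.cos θ := Real.one_sub_sq_div_two_lt_cos hθpos.ne'
  have hratio : a (k + 2) / Real.sqrt (2 - a (k + 1)) = Real.cos θ / Real.sin θ := by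
    rw [a_eq_cos (k + 2), sqrt_two_sub_a (k + 1), hθdef]
    rw [mul_div_mul_left _ _ (two_ne_zero)]
  have hcot2 : (2 : ℝ) ≤ Real.cos θ / Real.sin θ := by
    rw [le_div_iff₀ hsθ]
    nlinarith
  set u : ℤ := u₁ (k + 2) with hudef
  have hu : u = ⌊Real.cos θ / Real.sin θ⌋ := by
    rw [hudef]; unfold u₁
    rw [show k + 2 - 1 = k + 1 from rfl, hratio]
  have hu_le : (u : ℝ) ≤ Real.cos θ / Real.sin θ := by
    rw [hu]; exact Int.floor_le _
  have hu_gt : Real.cos θ / Real.sin θ < (u : ℝ) + 1 := by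
    rw [hu]; exact Int.lt_floor_add_one _
  have hu2 : (2 : ℝ) ≤ (u : ℝ) := by
    have h2 : (2 : ℤ) ≤ u := by
      rw [hu]; exact Int.le_floor.mpr (by exact_mod_cast hcot2)
    exact_mod_cast h2
  have hupos : (0 : ℝ) < (u : ℝ) := by linarith
  set α := Real.arctan (1 / (u : ℝ)) with hαdef
  have hαpos : 0 < α := by
    rw [hαdef, ← Real.arctan_zero]
    exact Real.arctan_strictMono (by positivity)
  have hαlt : α < π / 4 := by
    rw [hαdef, ← Real.arctan_one]
    exact Real.arctan_strictMono (by rw [div_lt_one hupos]; linarith)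
  have hαπ2 : α < π / 2 := by linarith
  set t := Real.tan θ with htdef
  have htant : t = Real.sin θ / Real.cos θ := Real.tan_eq_sin_div_cos θ
  have ht_pos : 0 < t := by rw [htant]; positivity
  have htanθ_le : t ≤ 1 / (u : ℝ) := by
    rw [htant, div_le_div_iff₀ hcθ hupos]
    rw [le_div_iff₀ hsθ] at hu_le
    nlinarith
  have hθα : θ ≤ α := by
    rw [← Real.arctan_tan (x := θ) (by linarith) hθhalf, hαdef]
    exact Real.arctan_strictMono.monotone htanθ_le
  have hsub : α - θ ≤ 1 / (u : ℝ) - t := by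
    have h := tan_sub_ge hθpos.le hθα hαπ2
    rwa [hαdef, Real.tan_arctan, ← htdef, ← hαdef] at h
  have ht2θ : t ≤ 2 * θ := by
    rw [htant, div_le_iff₀ hcθ]
    nlinarith
  have ht45 : t ≤ 4 / 5 := by linarith
  have hinv : 1 / (u : ℝ) ≤ t / (1 - t) := by
    have hfrac : (1 - t) / t ≤ (u : ℝ) := by
      have h1t : Real.cos θ / Real.sin θ = 1 / t := by
        rw [htant, one_div_div]
      rw [h1t, div_lt_iff₀ ht_pos] at hu_gt
      rw [div_le_iff₀ ht_pos]
      nlinarith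
    have hfp : 0 < (1 - t) / t := by
      apply div_pos (by linarith) ht_pos
    calc 1 / (u : ℝ) ≤ 1 / ((1 - t) / t) := one_div_le_one_div_of_le hfp hfrac
    _ = t / (1 - t) := by rw [one_div_div]
  have hfinal : 1 / (u : ℝ) - t ≤ 5 * t ^ 2 := by
    have h1t0 : (1 : ℝ) - t ≠ 0 := by linarith
    have h1 : t / (1 - t) - t = t ^ 2 / (1 - t) := by
      field_simp
      ring
    have h2 : t ^ 2 / (1 - t) ≤ 5 * t ^ 2 := by
      rw [div_le_iff₀ (by linarith : (0:ℝ) < 1 - t)]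
      nlinarith
    linarith
  have ht2sq : t ^ 2 ≤ 4 * θ ^ 2 := by nlinarith
  have hαup : α ≤ θ + 20 * θ ^ 2 := by linarith
  -- φ computation
  have hu0 : (u : ℝ) ≠ 0 := hupos.ne'
  have hu1 : (u : ℝ) ^ 2 - 1 ≠ 0 := by nlinarith
  have harg : 2 * (u : ℝ) / ((u : ℝ) ^ 2 - 1) = Real.tan (2 * α) := by
    rw [Real.tan_two_mul, hαdef, Real.tan_arctan]
    rw [div_eq_div_iff hu1]
    · field_simp
    · have : (1 / (u:ℝ)) ^ 2 < 1 := by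
        rw [div_pow, one_pow, div_lt_one (by positivity)]
        nlinarith
      nlinarith
  have hφ : φ (k + 2) = 2 ^ (k + 2) * α := by
    show (2 : ℝ) ^ (k + 1) * Real.arctan (2 * (u : ℝ) / ((u : ℝ) ^ 2 - 1)) = _
    rw [harg, Real.arctan_tan (by linarith) (by linarith), pow_succ]
    ring
  have h2k : (2 : ℝ) ^ (k + 2) * θ = π / 2 := by
    rw [hθdef, show ((2:ℝ) ^ (k + 3)) = 2 ^ (k + 2) * 2 from pow_succ 2 (k + 2)]
    have : ((2:ℝ) ^ (k + 2)) ≠ 0 := by positivity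
    field_simp
  have hP : (0 : ℝ) < 2 ^ (k + 2) := by positivity
  constructor
  · rw [hφ, ← h2k]
    exact mul_le_mul_of_nonneg_left hθα hP.le
  · rw [hφ]
    have hsq : (2 : ℝ) ^ (k + 2) * θ ^ 2 = π ^ 2 / (4 * 2 ^ (k + 2)) := by
      rw [hθdef, show ((2:ℝ) ^ (k + 3)) = 2 ^ (k + 2) * 2 from pow_succ 2 (k + 2)]
      field_simp
      ring
    have := mul_le_mul_of_nonneg_left hαup hP.le
    rw [mul_add] at this
    calc (2:ℝ) ^ (k+2) * α ≤ 2 ^ (k+2) * θ + 2 ^ (k+2) * (20 * θ ^ 2) := this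
    _ = π / 2 + 20 * (2 ^ (k+2) * θ ^ 2) := by rw [h2k]; ring
    _ = π / 2 + 5 * π ^ 2 / 2 ^ (k + 2) := by rw [hsq]; field_simp; ring

theorem stmt_14 :
    Tendsto (fun k : ℕ => (1 - Real.sin (φ (k + 2))) / Real.cos (φ (k + 2))) atTop
      (nhds 0) := by
  have hπ := Real.pi_pos
  have hπlt : π < 3.15 := Real.pi_lt_d2
  have h1 : Tendsto (fun k : ℕ => φ (k + 2)) atTop (nhds (π / 2)) := by
    have hup : Tendsto (fun k : ℕ => π / 2 + 5 * π ^ 2 / 2 ^ (k + 2)) atTop (nhds (π / 2)) := by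
      have h0 : Tendsto (fun k : ℕ => 5 * π ^ 2 / 2 ^ (k + 2)) atTop (nhds 0) := by
        have hg : Tendsto (fun k : ℕ => ((1:ℝ)/2) ^ k) atTop (nhds 0) :=
          tendsto_pow_atTop_nhds_zero_of_lt_one (by norm_num) (by norm_num)
        have := hg.const_mul (5 * π ^ 2 / 4)
        rw [mul_zero] at this
        refine this.congr fun k => ?_
        rw [div_pow, one_pow, pow_add]
        field_simp
        ring
      have := tendsto_const_nhds.add h0 (α := ℕ) (f := fun _ : ℕ => π / 2)
      rwa [add_zero] at this
    exact tendsto_of_tendsto_of_tendsto_of_le_of_le tendsto_const_nhds hup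
      (fun k => (phi_bounds k).1) (fun k => (phi_bounds k).2)
  have h2 : Tendsto (fun x : ℝ => Real.tan (π / 4 - x / 2)) (nhds (π / 2)) (nhds 0) := by
    have hc : ContinuousAt Real.tan 0 := Real.continuousAt_tan.mpr (by simp)
    have htan : Tendsto Real.tan (nhds 0) (nhds 0) := by
      have := hc.tendsto
      rwa [Real.tan_zero] at this
    have hval : π / 4 - (π / 2) / 2 = 0 := by ring
    have hinner : Tendsto (fun x : ℝ => π / 4 - x / 2) (nhds (π / 2)) (nhds 0) := by
      have : Tendsto (fun x : ℝ => π / 4 - x / 2) (nhds (π / 2))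
          (nhds (π / 4 - (π / 2) / 2)) :=
        (continuous_const.sub (continuous_id.div_const 2)).continuousAt
      rwa [hval] at this
    exact htan.comp hinner
  have h3 := h2.comp h1
  apply h3.congr'
  filter_upwards [eventually_ge_atTop 3] with k hk
  have hb := phi_bounds k
  have h32 : (32 : ℝ) ≤ 2 ^ (k + 2) := by
    calc (32 : ℝ) = 2 ^ 5 := by norm_num
    _ ≤ 2 ^ (k + 2) := by
      apply pow_le_pow_right₀ one_le_two
      omega
  have hlt : φ (k + 2) < π := by
    have hd : 5 * π ^ 2 / 2 ^ (k + 2) ≤ 5 * π ^ 2 / 32 := by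
      apply div_le_div_of_nonneg_left (by positivity) (by norm_num) h32
    nlinarith [hb.2]
  have hpos : 0 < φ (k + 2) := lt_of_lt_of_le (by linarith) hb.1
  exact (key_id hpos hlt).symm
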